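/- The sum of an independent uniform random variable on [−a, a] (a > 0) and a non-degenerate centered Gaussian random variable (σ² > 0) is not uniformly distributed on any interval [−a', a']. -/

import Mathlib

open MeasureTheory ProbabilityTheory Real
open scoped NNReal

/-- The uniform distribution on the interval `[-a, a]`, given by the density
`(2a)⁻¹` on `[-a, a]` with respect to Lebesgue measure. -/
noncomputable def uniformSymmMeasure (a : ℝ) : Measure ℝ :=
  volume.withDensity fun x =>
    Set.indicator (Set.Icc (-a) a) (fun _ => ENNReal.ofReal (1 / (2 * a))) x

lemma uniformSymmMeasure_apply_zero {a : ℝ} {s : Set ℝ} (hs : MeasurableSet s)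
    (h : ∀ x ∈ s, x ∉ Set.Icc (-a) a) : uniformSymmMeasure a s = 0 := by
  rw [uniformSymmMeasure, withDensity_apply _ hs]
  rw [setLIntegral_congr_fun hs (fun x hx =>
    Set.indicator_of_notMem (h x hx) _)]
  simp

/-- The sum of an independent uniform random variable on `[−a, a]` (`a > 0`) and a
non-degenerate centered Gaussian random variable (variance `v > 0`) is not uniformly
distributed on any interval `[−a', a']`. -/
theorem stmt_5 {Ω : Type*} [MeasurableSpace Ω] (μ : Measure Ω) [IsProbabilityMeasure μ]
    (X Y : Ω → ℝ) (hMX : Measurable X) (hMY : Measurable Y)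
    (hindep : IndepFun X Y μ)
    (a : ℝ) (ha : 0 < a) (v : ℝ≥0) (hv : 0 < v)
    (hX : μ.map X = uniformSymmMeasure a)
    (hY : μ.map Y = gaussianReal 0 v) :
    ∀ a' : ℝ, μ.map (fun ω => X ω + Y ω) ≠ uniformSymmMeasure a' := by
  intro a' h
  -- the sum gives positive mass to (a', ∞), but the uniform measure gives 0
  have hvne : v ≠ 0 := hv.ne'
  -- P(X < -a) = 0
  have hXlt : μ (X ⁻¹' Set.Iio (-a)) = 0 := by
    rw [← Measure.map_apply hMX measurableSet_Iio, hX]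
    exact uniformSymmMeasure_apply_zero measurableSet_Iio
      (fun x hx hx' => absurd hx'.1 (not_le.mpr hx))
  -- P(X ≥ -a) = 1
  have hXge : μ (X ⁻¹' Set.Ici (-a)) = 1 := by
    have hc : X ⁻¹' Set.Ici (-a) = (X ⁻¹' Set.Iio (-a))ᶜ := by
      ext ω; simp [not_lt]
    rw [hc, measure_compl (hMX measurableSet_Iio) (measure_ne_top μ _), hXlt,
      measure_univ, tsub_zero]
  -- P(Y > a' + a) > 0
  have hYpos : 0 < μ (Y ⁻¹' Set.Ioi (a' + a)) := by
    rw [← Measure.map_apply hMY measurableSet_Ioi, hY,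
      gaussianReal_of_var_ne_zero 0 hvne, withDensity_apply _ measurableSet_Ioi]
    rw [lintegral_pos_iff_support (measurable_gaussianPDF 0 v)]
    have hsupp : Function.support (gaussianPDF 0 v) = Set.univ := by
      ext x; simp [Function.mem_support, (gaussianPDF_pos 0 hvne x).ne']
    rw [hsupp]
    simp [Measure.restrict_apply_univ]
  -- the key inclusion
  have hsub : X ⁻¹' Set.Ici (-a) ∩ Y ⁻¹' Set.Ioi (a' + a)
      ⊆ (fun ω => X ω + Y ω) ⁻¹' Set.Ioi a' := by
    rintro ω ⟨h1, h2⟩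
    simp only [Set.mem_preimage, Set.mem_Ici, Set.mem_Ioi] at *
    linarith
  have hpos : 0 < μ.map (fun ω => X ω + Y ω) (Set.Ioi a') := by
    rw [Measure.map_apply (f := fun ω => X ω + Y ω) (hMX.add hMY) measurableSet_Ioi]
    calc 0 < μ (X ⁻¹' Set.Ici (-a)) * μ (Y ⁻¹' Set.Ioi (a' + a)) := by
              rw [hXge, one_mul]; exact hYpos
      _ = μ (X ⁻¹' Set.Ici (-a) ∩ Y ⁻¹' Set.Ioi (a' + a)) :=
          (hindep.measure_inter_preimage_eq_mul _ _ measurableSet_Ici measurableSet_Ioi).symm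
      _ ≤ _ := measure_mono hsub
  rw [h, uniformSymmMeasure_apply_zero measurableSet_Ioi
    (fun x hx hx' => absurd hx'.2 (not_le.mpr hx))] at hpos
  exact lt_irrefl 0 hpos
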